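/- Fix δ ∈ (0,1) and smooth functions φ₀, φ₁, φ₂ on [0,1] × S¹. Let (h, v¹, v²) be a C² solution, with h > 0, of the 2D rotating shallow water system B h = −h div v, B v¹ = v² − ∂₁h, B v² = −v¹ − ∂₂h on an open neighborhood of {0} × (1−δ, 1) × S¹ in ℝ_t × ℝ × S¹, whose data at t = 0 are ρ(0,x₁,x₂) = δφ₀(s,θ), v¹(0,x₁,x₂) = δφ₁(s,θ), v²(0,x₁,x₂) = δ²φ₂(s,θ), where ρ = ln h, s = (1−x₁)/δ, θ = x₂. Set η = √h = e^{ρ/2}, ξ = (1 + ∂₁v² − ∂₂v¹) e^{−ρ}, and L_f = ∂_t + (v¹ + η)∂₁ + v²∂₂. Then at every point of {0} × (1−δ,1) × S¹: L_f ρ = ∂_s φ₁ − η ∂_s φ₀ − δ² ∂_θ φ₂; L_f v¹ = −η ∂_s φ₁ + e^{δφ₀} ∂_s φ₀ + δ² φ₂; and L_f ξ = η e^{−δφ₀} ( ∂_s∂_θ φ₁ + ∂_s φ₀ + ∂_s² φ₂ − δ ∂_s φ₀ (∂_s φ₂ + ∂_θ φ₁) ), all profile derivatives being evaluated at (s, θ)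 = ((1−x₁)/δ, x₂). -/

import Mathlib

/-- Partial derivative in the `i`-th coordinate direction of spacetime
`ℝ_t × ℝ²_x ≃ (Fin 3 → ℝ)`, coordinates `(x⁰, x¹, x²) = (t, x₁, x₂)`. -/
noncomputable def pd (i : Fin 3) (f : (Fin 3 → ℝ) → ℝ) (x : Fin 3 → ℝ) : ℝ :=
  fderiv ℝ f x (Pi.single i 1)

/-- Material derivative `B = ∂ₜ + v¹∂₁ + v²∂₂`. -/
noncomputable def matD (v1 v2 f : (Fin 3 → ℝ) → ℝ) (x : Fin 3 → ℝ) : ℝ :=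
  pd 0 f x + v1 x * pd 1 f x + v2 x * pd 2 f x

/-- `L_f = ∂ₜ + (v¹ + η)∂₁ + v²∂₂`, the derivative along the flat outgoing null
direction, with `η = √h`. -/
noncomputable def Lf (h v1 v2 f : (Fin 3 → ℝ) → ℝ) (x : Fin 3 → ℝ) : ℝ :=
  pd 0 f x + (v1 x + Real.sqrt (h x)) * pd 1 f x + v2 x * pd 2 f x

section pdcalc
variable {f g : (Fin 3 → ℝ) → ℝ} {p : Fin 3 → ℝ} {i : Fin 3} {c : ℝ}

lemma pd_congr (h : f =ᶠ[nhds p] g) (i : Fin 3) : pd i f p = pd i g p := by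
  unfold pd; rw [h.fderiv_eq]

lemma pd_sub (hf : DifferentiableAt ℝ f p) (hg : DifferentiableAt ℝ g p) :
    pd i (fun y => f y - g y) p = pd i f p - pd i g p := by
  simp [pd, fderiv_fun_sub hf hg]

lemma pd_const_add : pd i (fun y => c + f y) p = pd i f p := by
  simp [pd, fderiv_const_add]

lemma pd_neg : pd i (fun y => -(f y)) p = -pd i f p := by
  simp [pd, fderiv_neg]

lemma pd_mul (hf : DifferentiableAt ℝ f p) (hg : DifferentiableAt ℝ g p) :
    pd i (fun y => f y * g y) p = pd i f p * g p + f p * pd i g p := by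
  simp only [pd, (hf.hasFDerivAt.fun_mul hg.hasFDerivAt).fderiv,
    ContinuousLinearMap.add_apply, ContinuousLinearMap.smul_apply, smul_eq_mul]
  ring

lemma pd_exp (hf : DifferentiableAt ℝ f p) :
    pd i (fun y => Real.exp (f y)) p = Real.exp (f p) * pd i f p := by
  simp [pd, hf.hasFDerivAt.exp.fderiv]

lemma pd_log (hf : DifferentiableAt ℝ f p) (hne : f p ≠ 0) :
    pd i (fun y => Real.log (f y)) p = (f p)⁻¹ * pd i f p := by
  simp [pd, (hf.hasFDerivAt.log hne).fderiv]

end pdcalc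

section pdreg
variable {U : Set (Fin 3 → ℝ)} {f : (Fin 3 → ℝ) → ℝ} {p : Fin 3 → ℝ}

lemma differentiableAt_of_c2 (hf : ContDiffOn ℝ 2 f U) (hU : IsOpen U) (hp : p ∈ U) :
    DifferentiableAt ℝ f p :=
  (hf.contDiffAt (hU.mem_nhds hp)).differentiableAt two_ne_zero

lemma differentiableAt_pd (hf : ContDiffOn ℝ 2 f U) (hU : IsOpen U) (hp : p ∈ U) (j : Fin 3) :
    DifferentiableAt ℝ (pd j f) p := by
  have h1 : ContDiffOn ℝ 1 (fderiv ℝ f) U := hf.fderiv_of_isOpen hU (by norm_num)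
  have h2 : ContDiffOn ℝ 1 (fun x => fderiv ℝ f x (Pi.single j 1)) U :=
    (ContinuousLinearMap.apply ℝ ℝ (Pi.single j 1 : Fin 3 → ℝ)).contDiff.comp_contDiffOn h1
  exact ((h2.differentiableOn one_ne_zero).differentiableAt (hU.mem_nhds hp))

lemma pd_comm (hf : ContDiffOn ℝ 2 f U) (hU : IsOpen U) (hp : p ∈ U) (i j : Fin 3) :
    pd i (pd j f) p = pd j (pd i f) p := by
  have hev : ∀ᶠ y in nhds p, HasFDerivAt f (fderiv ℝ f y) y := by
    filter_upwards [hU.mem_nhds hp] with y hy using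
      (differentiableAt_of_c2 hf hU hy).hasFDerivAt
  have h1 : ContDiffOn ℝ 1 (fderiv ℝ f) U := hf.fderiv_of_isOpen hU (by norm_num)
  have hd' : DifferentiableAt ℝ (fderiv ℝ f) p :=
    (h1.differentiableOn one_ne_zero).differentiableAt (hU.mem_nhds hp)
  have hx : HasFDerivAt (fderiv ℝ f) (fderiv ℝ (fderiv ℝ f) p) p := hd'.hasFDerivAt
  have key := second_derivative_symmetric_of_eventually hev hx (Pi.single i 1) (Pi.single j 1)
  have comp : ∀ k l : Fin 3, pd k (pd l f) p
      = fderiv ℝ (fderiv ℝ f) p (Pi.single k 1) (Pi.single l 1) := by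
    intro k l
    have hA : HasFDerivAt (fun x => fderiv ℝ f x (Pi.single l 1 : Fin 3 → ℝ))
        ((ContinuousLinearMap.apply ℝ ℝ (Pi.single l 1 : Fin 3 → ℝ)).comp
          (fderiv ℝ (fderiv ℝ f) p)) p :=
      (ContinuousLinearMap.apply ℝ ℝ (Pi.single l 1 : Fin 3 → ℝ)).hasFDerivAt.comp p hx
    rw [show pd l f = fun x => fderiv ℝ f x (Pi.single l 1) from rfl]
    simp [pd, hA.fderiv]
  rw [comp, comp, key]

end pdreg

section shapes
variable {p : Fin 3 → ℝ}

lemma pd_shapeA {a b c d e f : (Fin 3 → ℝ) → ℝ} (i : Fin 3)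
    (ha : DifferentiableAt ℝ a p) (hb : DifferentiableAt ℝ b p)
    (hc : DifferentiableAt ℝ c p) (hd : DifferentiableAt ℝ d p)
    (he : DifferentiableAt ℝ e p) (hf : DifferentiableAt ℝ f p) :
    pd i (fun x => a x - b x - c x * d x - e x * f x) p
      = pd i a p - pd i b p - (pd i c p * d p + c p * pd i d p)
        - (pd i e p * f p + e p * pd i f p) := by
  rw [pd_sub (((ha.fun_sub hb)).fun_sub (hc.fun_mul hd)) (he.fun_mul hf),
    pd_sub (ha.fun_sub hb) (hc.fun_mul hd), pd_sub ha hb, pd_mul hc hd, pd_mul he hf]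

lemma pd_shapeB {a b c d e f : (Fin 3 → ℝ) → ℝ} (i : Fin 3)
    (ha : DifferentiableAt ℝ a p) (hb : DifferentiableAt ℝ b p)
    (hc : DifferentiableAt ℝ c p) (hd : DifferentiableAt ℝ d p)
    (he : DifferentiableAt ℝ e p) (hf : DifferentiableAt ℝ f p) :
    pd i (fun x => -(a x) - b x - c x * d x - e x * f x) p
      = -pd i a p - pd i b p - (pd i c p * d p + c p * pd i d p)
        - (pd i e p * f p + e p * pd i f p) := by
  rw [pd_sub (((ha.fun_neg.fun_sub hb)).fun_sub (hc.fun_mul hd)) (he.fun_mul hf),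
    pd_sub (ha.fun_neg.fun_sub hb) (hc.fun_mul hd), pd_sub ha.fun_neg hb, pd_neg, pd_mul hc hd, pd_mul he hf]

end shapes

section xi
variable {U : Set (Fin 3 → ℝ)} {h v1 v2 : (Fin 3 → ℝ) → ℝ} {p : Fin 3 → ℝ}

lemma matD_omega (hU : IsOpen U)
    (hh : ContDiffOn ℝ 2 h U) (hv1 : ContDiffOn ℝ 2 v1 U) (hv2 : ContDiffOn ℝ 2 v2 U)
    (hmom1 : ∀ x ∈ U, matD v1 v2 v1 x = v2 x - pd 1 h x)
    (hmom2 : ∀ x ∈ U, matD v1 v2 v2 x = -v1 x - pd 2 h x)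
    (hp : p ∈ U) :
    matD v1 v2 (fun y => pd 1 v2 y - pd 2 v1 y) p
      = -((1 + pd 1 v2 p - pd 2 v1 p) * (pd 1 v1 p + pd 2 v2 p)) := by
  have dv1 := differentiableAt_of_c2 hv1 hU hp
  have dv2 := differentiableAt_of_c2 hv2 hU hp
  have dph := fun j => differentiableAt_pd hh hU hp j
  have dpv1 := fun j => differentiableAt_pd hv1 hU hp j
  have dpv2 := fun j => differentiableAt_pd hv2 hU hp j
  have e1 : pd 0 v1 =ᶠ[nhds p]
      fun x => v2 x - pd 1 h x - v1 x * pd 1 v1 x - v2 x * pd 2 v1 x := by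
    filter_upwards [hU.mem_nhds hp] with x hx
    have := hmom1 x hx; simp only [matD] at this; linarith
  have e2 : pd 0 v2 =ᶠ[nhds p]
      fun x => -(v1 x) - pd 2 h x - v1 x * pd 1 v2 x - v2 x * pd 2 v2 x := by
    filter_upwards [hU.mem_nhds hp] with x hx
    have := hmom2 x hx; simp only [matD] at this; linarith
  have pd1E2 : pd 1 (pd 0 v2) p
      = -pd 1 v1 p - pd 1 (pd 2 h) p - (pd 1 v1 p * pd 1 v2 p + v1 p * pd 1 (pd 1 v2) p)
        - (pd 1 v2 p * pd 2 v2 p + v2 p * pd 1 (pd 2 v2) p) := by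
    rw [pd_congr e2 1]
    exact pd_shapeB 1 dv1 (dph 2) dv1 (dpv2 1) dv2 (dpv2 2)
  have pd2E1 : pd 2 (pd 0 v1) p
      = pd 2 v2 p - pd 2 (pd 1 h) p - (pd 2 v1 p * pd 1 v1 p + v1 p * pd 2 (pd 1 v1) p)
        - (pd 2 v2 p * pd 2 v1 p + v2 p * pd 2 (pd 2 v1) p) := by
    rw [pd_congr e1 2]
    exact pd_shapeA 2 dv2 (dph 1) dv1 (dpv1 1) dv2 (dpv1 2)
  have comm_h := pd_comm hh hU hp 1 2
  have comm_v1 := pd_comm hv1 hU hp 2 1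
  have comm_v2 := pd_comm hv2 hU hp 1 2
  have comm0_v2 := pd_comm hv2 hU hp 0 1
  have comm0_v1 := pd_comm hv1 hU hp 0 2
  have expand : ∀ i : Fin 3, pd i (fun y => pd 1 v2 y - pd 2 v1 y) p
      = pd i (pd 1 v2) p - pd i (pd 2 v1) p := fun i => pd_sub (dpv2 1) (dpv1 2)
  simp only [matD, expand, comm0_v2, comm0_v1, pd1E2, pd2E1]
  rw [comm_h, comm_v1, comm_v2]
  ring

lemma pd_xi (hU : IsOpen U)
    (hh : ContDiffOn ℝ 2 h U) (hv1 : ContDiffOn ℝ 2 v1 U) (hv2 : ContDiffOn ℝ 2 v2 U)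
    (hpos : 0 < h p) (hp : p ∈ U) (i : Fin 3) :
    pd i (fun y => (1 + pd 1 v2 y - pd 2 v1 y) * Real.exp (-(Real.log (h y)))) p
      = (pd i (pd 1 v2) p - pd i (pd 2 v1) p) * Real.exp (-(Real.log (h p)))
        + (1 + pd 1 v2 p - pd 2 v1 p)
          * (Real.exp (-(Real.log (h p))) * (-((h p)⁻¹ * pd i h p))) := by
  have dh := differentiableAt_of_c2 hh hU hp
  have dpv1 := fun j => differentiableAt_pd hv1 hU hp j
  have dpv2 := fun j => differentiableAt_pd hv2 hU hp j
  have hne : h p ≠ 0 := hpos.ne'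
  have dW : DifferentiableAt ℝ (fun y => 1 + pd 1 v2 y - pd 2 v1 y) p :=
    ((differentiableAt_const (1:ℝ)).add (dpv2 1)).sub (dpv1 2)
  have dlog : DifferentiableAt ℝ (fun y => Real.log (h y)) p := dh.log hne
  have dE : DifferentiableAt ℝ (fun y => Real.exp (-(Real.log (h y)))) p := dlog.neg.exp
  rw [pd_mul dW dE]
  have hW : pd i (fun y => 1 + pd 1 v2 y - pd 2 v1 y) p
      = pd i (pd 1 v2) p - pd i (pd 2 v1) p := by
    rw [pd_sub ((differentiableAt_const (1:ℝ)).fun_add (dpv2 1)) (dpv1 2)]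
    congr 1
    exact pd_const_add
  have hE : pd i (fun y => Real.exp (-(Real.log (h y)))) p
      = Real.exp (-(Real.log (h p))) * (-((h p)⁻¹ * pd i h p)) := by
    rw [pd_exp dlog.fun_neg, pd_neg, pd_log dh hne]
  rw [hW, hE]

lemma matD_xi_zero (hU : IsOpen U)
    (hh : ContDiffOn ℝ 2 h U) (hv1 : ContDiffOn ℝ 2 v1 U) (hv2 : ContDiffOn ℝ 2 v2 U)
    (hpos : ∀ x ∈ U, 0 < h x)
    (hmass : ∀ x ∈ U, matD v1 v2 h x = -(h x) * (pd 1 v1 x + pd 2 v2 x))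
    (hmom1 : ∀ x ∈ U, matD v1 v2 v1 x = v2 x - pd 1 h x)
    (hmom2 : ∀ x ∈ U, matD v1 v2 v2 x = -v1 x - pd 2 h x)
    (hp : p ∈ U) :
    matD v1 v2 (fun y => (1 + pd 1 v2 y - pd 2 v1 y) * Real.exp (-(Real.log (h y)))) p = 0 := by
  have hne : h p ≠ 0 := (hpos p hp).ne'
  have key : matD v1 v2 (fun y => (1 + pd 1 v2 y - pd 2 v1 y) * Real.exp (-(Real.log (h y)))) p
      = (matD v1 v2 (fun y => pd 1 v2 y - pd 2 v1 y) p) * Real.exp (-(Real.log (h p)))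
        + (1 + pd 1 v2 p - pd 2 v1 p)
          * (Real.exp (-(Real.log (h p))) * (-((h p)⁻¹ * matD v1 v2 h p))) := by
    simp only [matD, pd_xi hU hh hv1 hv2 (hpos p hp) hp,
      pd_sub (differentiableAt_pd hv2 hU hp 1) (differentiableAt_pd hv1 hU hp 2)]
    ring
  rw [key, matD_omega hU hh hv1 hv2 hmom1 hmom2 hp, hmass p hp]
  field_simp
  ring


section profile
variable {φ : ℝ → ℝ → ℝ} {s θ : ℝ}

private lemma openV : IsOpen (Set.Ioo (0:ℝ) 1 ×ˢ (Set.univ : Set ℝ)) :=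
  isOpen_Ioo.prod isOpen_univ

lemma profile_cd (hφ : ContDiffOn ℝ (⊤ : ℕ∞) (Function.uncurry φ) (Set.Icc 0 1 ×ˢ Set.univ)) :
    ContDiffOn ℝ (⊤ : ℕ∞) (Function.uncurry φ) (Set.Ioo (0:ℝ) 1 ×ˢ (Set.univ : Set ℝ)) :=
  hφ.mono (Set.prod_mono Set.Ioo_subset_Icc_self subset_rfl)

lemma profile_diffAt (hφ : ContDiffOn ℝ (⊤ : ℕ∞) (Function.uncurry φ) (Set.Icc 0 1 ×ˢ Set.univ))
    (hs : s ∈ Set.Ioo (0:ℝ) 1) (θ : ℝ) :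
    DifferentiableAt ℝ (Function.uncurry φ) (s, θ) :=
  (((profile_cd hφ).contDiffAt (openV.mem_nhds (by simp [hs]))).differentiableAt (by simp))

lemma profile_diff_s (hφ : ContDiffOn ℝ (⊤ : ℕ∞) (Function.uncurry φ) (Set.Icc 0 1 ×ˢ Set.univ))
    (hs : s ∈ Set.Ioo (0:ℝ) 1) (θ : ℝ) :
    DifferentiableAt ℝ (fun s' => φ s' θ) s := by
  have h2 : DifferentiableAt ℝ (fun s' : ℝ => (s', θ)) s :=
    differentiableAt_id.prodMk (differentiableAt_const θ)
  exact (profile_diffAt hφ hs θ).comp s h2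

lemma profile_diff_t (hφ : ContDiffOn ℝ (⊤ : ℕ∞) (Function.uncurry φ) (Set.Icc 0 1 ×ˢ Set.univ))
    (hs : s ∈ Set.Ioo (0:ℝ) 1) (θ : ℝ) :
    DifferentiableAt ℝ (fun θ' => φ s θ') θ := by
  have h2 : DifferentiableAt ℝ (fun θ' : ℝ => (s, θ')) θ :=
    (differentiableAt_const s).prodMk differentiableAt_id
  exact (profile_diffAt hφ hs θ).comp θ h2

/-- derivative in θ as evaluation of full fderiv -/
lemma profile_hasDeriv_t (hφ : ContDiffOn ℝ (⊤ : ℕ∞) (Function.uncurry φ) (Set.Icc 0 1 ×ˢ Set.univ))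
    (hs : s ∈ Set.Ioo (0:ℝ) 1) (θ : ℝ) :
    HasDerivAt (fun θ' => φ s θ') (fderiv ℝ (Function.uncurry φ) (s, θ) (0, 1)) θ := by
  have h2 : HasDerivAt (fun θ' : ℝ => ((s:ℝ), θ')) ((0:ℝ), (1:ℝ)) θ :=
    (hasDerivAt_const θ s).prodMk (hasDerivAt_id θ)
  exact (profile_diffAt hφ hs θ).hasFDerivAt.comp_hasDerivAt θ h2

lemma profile_hasDeriv_s (hφ : ContDiffOn ℝ (⊤ : ℕ∞) (Function.uncurry φ) (Set.Icc 0 1 ×ˢ Set.univ))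
    (hs : s ∈ Set.Ioo (0:ℝ) 1) (θ : ℝ) :
    HasDerivAt (fun s' => φ s' θ) (fderiv ℝ (Function.uncurry φ) (s, θ) (1, 0)) s := by
  have h2 : HasDerivAt (fun s' : ℝ => (s', θ)) ((1:ℝ), (0:ℝ)) s :=
    (hasDerivAt_id s).prodMk (hasDerivAt_const s θ)
  exact (profile_diffAt hφ hs θ).hasFDerivAt.comp_hasDerivAt s h2

private lemma fderiv_eval_diffAt
    (hφ : ContDiffOn ℝ (⊤ : ℕ∞) (Function.uncurry φ) (Set.Icc 0 1 ×ˢ Set.univ))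
    (hs : s ∈ Set.Ioo (0:ℝ) 1) (θ : ℝ) (v : ℝ × ℝ) :
    DifferentiableAt ℝ (fun s' => fderiv ℝ (Function.uncurry φ) (s', θ) v) s := by
  have hF : ContDiffOn ℝ (⊤ : ℕ∞) (fderiv ℝ (Function.uncurry φ))
      (Set.Ioo (0:ℝ) 1 ×ˢ (Set.univ : Set ℝ)) :=
    (profile_cd hφ).fderiv_of_isOpen openV (by simp)
  have hF' : ContDiffOn ℝ (⊤ : ℕ∞)
      (fun q => fderiv ℝ (Function.uncurry φ) q v)
      (Set.Ioo (0:ℝ) 1 ×ˢ (Set.univ : Set ℝ)) :=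
    (ContinuousLinearMap.apply ℝ ℝ v).contDiff.comp_contDiffOn hF
  have hFd : DifferentiableAt ℝ (fun q => fderiv ℝ (Function.uncurry φ) q v) (s, θ) :=
    (hF'.differentiableOn (by simp)).differentiableAt (openV.mem_nhds (by simp [hs]))
  exact hFd.comp s ((differentiableAt_id (𝕜 := ℝ) (x := s)).prodMk (differentiableAt_const (𝕜 := ℝ) θ))

lemma profile_diff_st (hφ : ContDiffOn ℝ (⊤ : ℕ∞) (Function.uncurry φ) (Set.Icc 0 1 ×ˢ Set.univ))
    (hs : s ∈ Set.Ioo (0:ℝ) 1) (θ : ℝ) :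
    DifferentiableAt ℝ (fun s' => deriv (fun θ' => φ s' θ') θ) s := by
  apply (fderiv_eval_diffAt hφ hs θ ((0:ℝ),(1:ℝ))).congr_of_eventuallyEq
  filter_upwards [isOpen_Ioo.eventually_mem hs] with s' hs'
  exact ((profile_hasDeriv_t hφ hs' θ).deriv).symm ▸ rfl

lemma profile_diff_ss (hφ : ContDiffOn ℝ (⊤ : ℕ∞) (Function.uncurry φ) (Set.Icc 0 1 ×ˢ Set.univ))
    (hs : s ∈ Set.Ioo (0:ℝ) 1) (θ : ℝ) :
    DifferentiableAt ℝ (fun s' => deriv (fun s'' => φ s'' θ) s') s := by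
  apply (fderiv_eval_diffAt hφ hs θ ((1:ℝ),(0:ℝ))).congr_of_eventuallyEq
  filter_upwards [isOpen_Ioo.eventually_mem hs] with s' hs'
  exact ((profile_hasDeriv_s hφ hs' θ).deriv).symm ▸ rfl

end profile

lemma pd_line {i : Fin 3} {f : (Fin 3 → ℝ) → ℝ} {p : Fin 3 → ℝ}
    (hf : DifferentiableAt ℝ f p) {g : ℝ → ℝ} {d : ℝ} (hg : HasDerivAt g d 0)
    (heq : ∀ᶠ u in nhds (0:ℝ), f (p + u • (Pi.single i 1 : Fin 3 → ℝ)) = g u) :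
    pd i f p = d := by
  have hline : HasDerivAt (fun u : ℝ => p + u • (Pi.single i 1 : Fin 3 → ℝ))
      ((1:ℝ) • (Pi.single i 1 : Fin 3 → ℝ)) 0 :=
    ((hasDerivAt_id (0:ℝ)).smul_const _).const_add p
  rw [one_smul] at hline
  have hfd : HasFDerivAt f (fderiv ℝ f p) (p + (0:ℝ) • (Pi.single i 1 : Fin 3 → ℝ)) := by
    simpa using hf.hasFDerivAt
  have hcomp : HasDerivAt (fun u : ℝ => f (p + u • (Pi.single i 1 : Fin 3 → ℝ)))
      (fderiv ℝ f p (Pi.single i 1)) 0 := hfd.comp_hasDerivAt 0 hline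
  have heq' : (fun u : ℝ => f (p + u • (Pi.single i 1 : Fin 3 → ℝ))) =ᶠ[nhds (0:ℝ)] g := heq
  have := (hcomp.congr_of_eventuallyEq heq'.symm).unique hg
  simpa [pd] using this

lemma vec_add1 (x₁ x₂ u : ℝ) :
    (![0,x₁,x₂] : Fin 3 → ℝ) + u • (Pi.single 1 1 : Fin 3 → ℝ) = ![0, x₁+u, x₂] := by
  ext i; fin_cases i <;> simp

lemma vec_add2 (x₁ x₂ u : ℝ) :
    (![0,x₁,x₂] : Fin 3 → ℝ) + u • (Pi.single 2 1 : Fin 3 → ℝ) = ![0, x₁, x₂+u] := by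
  ext i; fin_cases i <;> simp

lemma pd1_slice {δ x₁ x₂ : ℝ} (hδ0 : 0 < δ) (hx : x₁ ∈ Set.Ioo (1-δ) 1)
    {f : (Fin 3 → ℝ) → ℝ} (hf : DifferentiableAt ℝ f ![0,x₁,x₂])
    {g : ℝ → ℝ} {d : ℝ} (hg : HasDerivAt g d ((1-x₁)/δ))
    (hdata : ∀ y₁ ∈ Set.Ioo (1-δ) 1, f ![0,y₁,x₂] = g ((1-y₁)/δ)) :
    pd 1 f ![0,x₁,x₂] = -(1/δ) * d := by
  apply pd_line hf (g := fun u : ℝ => g ((1-(x₁+u))/δ))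
  · have hinner : HasDerivAt (fun u : ℝ => (1-(x₁+u))/δ) (-1/δ) 0 :=
      (((hasDerivAt_id (0:ℝ)).const_add x₁).const_sub 1).div_const δ
    have hg' : HasDerivAt g d ((1-(x₁+(0:ℝ)))/δ) := by
      rw [show (1-(x₁+(0:ℝ)))/δ = (1-x₁)/δ by ring_nf]; exact hg
    have := hg'.comp 0 hinner
    simpa [div_eq_mul_inv, mul_comm, Function.comp_def] using this
  · have hev : ∀ᶠ u : ℝ in nhds 0, x₁ + u ∈ Set.Ioo (1-δ) 1 := by
      have hc : ContinuousAt (fun u : ℝ => x₁ + u) 0 :=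
        (continuous_const.add continuous_id).continuousAt
      exact hc.eventually_mem (isOpen_Ioo.mem_nhds (by simpa using hx))
    filter_upwards [hev] with u hu
    rw [vec_add1]; exact hdata _ hu

lemma pd2_slice {x₁ x₂ : ℝ}
    {f : (Fin 3 → ℝ) → ℝ} (hf : DifferentiableAt ℝ f ![0,x₁,x₂])
    {g : ℝ → ℝ} {d : ℝ} (hg : HasDerivAt g d x₂)
    (hdata : ∀ y₂ : ℝ, f ![0,x₁,y₂] = g y₂) :
    pd 2 f ![0,x₁,x₂] = d := by
  apply pd_line hf (g := fun u : ℝ => g (x₂ + u))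
  · have hinner : HasDerivAt (fun u : ℝ => x₂ + u) 1 0 := (hasDerivAt_id (0:ℝ)).const_add x₂
    have hg' : HasDerivAt g d (x₂ + (0:ℝ)) := by rw [add_zero]; exact hg
    simpa [Function.comp_def] using hg'.comp 0 hinner
  · filter_upwards with u
    rw [vec_add2]; exact hdata _

/-- For short pulse initial data `ρ(0,x₁,x₂) = δφ₀(s,θ)`, `v¹(0,x₁,x₂) = δφ₁(s,θ)`,
`v²(0,x₁,x₂) = δ²φ₂(s,θ)` (with `s = (1−x₁)/δ`, `θ = x₂`) of a solution of the 2D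
rotating shallow water system, at every point of `{0} × (1−δ,1) × S¹`:
`L_f ρ = ∂ₛφ₁ − η∂ₛφ₀ − δ²∂_θφ₂`,
`L_f v¹ = −η∂ₛφ₁ + e^{δφ₀}∂ₛφ₀ + δ²φ₂`, and
`L_f ξ = η e^{−δφ₀}(∂ₛ∂_θφ₁ + ∂ₛφ₀ + ∂ₛ²φ₂ − δ∂ₛφ₀(∂ₛφ₂ + ∂_θφ₁))`,
where `ξ = (1 + ∂₁v² − ∂₂v¹)e^{−ρ}` is the potential vorticity and `S¹ = ℝ/ℤ`. -/
theorem short_pulse_data_null_derivatives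
    (δ : ℝ) (hδ0 : 0 < δ) (hδ1 : δ < 1)
    (φ₀ φ₁ φ₂ : ℝ → ℝ → ℝ)
    (hφ₀ : ContDiffOn ℝ (⊤ : ℕ∞) (Function.uncurry φ₀) (Set.Icc 0 1 ×ˢ Set.univ))
    (hφ₁ : ContDiffOn ℝ (⊤ : ℕ∞) (Function.uncurry φ₁) (Set.Icc 0 1 ×ˢ Set.univ))
    (hφ₂ : ContDiffOn ℝ (⊤ : ℕ∞) (Function.uncurry φ₂) (Set.Icc 0 1 ×ˢ Set.univ))
    (hp₀ : ∀ s θ : ℝ, φ₀ s (θ + 1) = φ₀ s θ)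
    (hp₁ : ∀ s θ : ℝ, φ₁ s (θ + 1) = φ₁ s θ)
    (hp₂ : ∀ s θ : ℝ, φ₂ s (θ + 1) = φ₂ s θ)
    (U : Set (Fin 3 → ℝ)) (hU : IsOpen U)
    (hsub : ∀ x₁ ∈ Set.Ioo (1 - δ) 1, ∀ x₂ : ℝ, (![0, x₁, x₂] : Fin 3 → ℝ) ∈ U)
    (h v1 v2 : (Fin 3 → ℝ) → ℝ)
    (hh : ContDiffOn ℝ 2 h U)
    (hv1 : ContDiffOn ℝ 2 v1 U) (hv2 : ContDiffOn ℝ 2 v2 U)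
    (hpos : ∀ x ∈ U, 0 < h x)
    (hmass : ∀ x ∈ U, matD v1 v2 h x = -(h x) * (pd 1 v1 x + pd 2 v2 x))
    (hmom1 : ∀ x ∈ U, matD v1 v2 v1 x = v2 x - pd 1 h x)
    (hmom2 : ∀ x ∈ U, matD v1 v2 v2 x = -v1 x - pd 2 h x)
    (hd0 : ∀ x₁ ∈ Set.Ioo (1 - δ) 1, ∀ x₂ : ℝ,
      Real.log (h ![0, x₁, x₂]) = δ * φ₀ ((1 - x₁) / δ) x₂)
    (hd1 : ∀ x₁ ∈ Set.Ioo (1 - δ) 1, ∀ x₂ : ℝ,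
      v1 ![0, x₁, x₂] = δ * φ₁ ((1 - x₁) / δ) x₂)
    (hd2 : ∀ x₁ ∈ Set.Ioo (1 - δ) 1, ∀ x₂ : ℝ,
      v2 ![0, x₁, x₂] = δ ^ 2 * φ₂ ((1 - x₁) / δ) x₂) :
    ∀ x₁ ∈ Set.Ioo (1 - δ) 1, ∀ x₂ : ℝ,
      (Lf h v1 v2 (fun y => Real.log (h y)) ![0, x₁, x₂]
        = deriv (fun s' => φ₁ s' x₂) ((1 - x₁) / δ)
          - Real.sqrt (h ![0, x₁, x₂]) * deriv (fun s' => φ₀ s' x₂) ((1 - x₁) / δ)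
          - δ ^ 2 * deriv (fun θ' => φ₂ ((1 - x₁) / δ) θ') x₂) ∧
      (Lf h v1 v2 v1 ![0, x₁, x₂]
        = -Real.sqrt (h ![0, x₁, x₂]) * deriv (fun s' => φ₁ s' x₂) ((1 - x₁) / δ)
          + Real.exp (δ * φ₀ ((1 - x₁) / δ) x₂) * deriv (fun s' => φ₀ s' x₂) ((1 - x₁) / δ)
          + δ ^ 2 * φ₂ ((1 - x₁) / δ) x₂) ∧
      (Lf h v1 v2
          (fun y => (1 + pd 1 v2 y - pd 2 v1 y) * Real.exp (-(Real.log (h y))))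
          ![0, x₁, x₂]
        = Real.sqrt (h ![0, x₁, x₂]) * Real.exp (-(δ * φ₀ ((1 - x₁) / δ) x₂))
          * (deriv (fun s' => deriv (fun θ' => φ₁ s' θ') x₂) ((1 - x₁) / δ)
              + deriv (fun s' => φ₀ s' x₂) ((1 - x₁) / δ)
              + deriv (fun s' => deriv (fun s'' => φ₂ s'' x₂) s') ((1 - x₁) / δ)
              - δ * deriv (fun s' => φ₀ s' x₂) ((1 - x₁) / δ)
                  * (deriv (fun s' => φ₂ s' x₂) ((1 - x₁) / δ)
                      + deriv (fun θ' => φ₁ ((1 - x₁) / δ) θ') x₂))) := by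
  intro x₁ hx₁ x₂
  have hδne : δ ≠ 0 := hδ0.ne'
  set s : ℝ := (1 - x₁) / δ with hs_def
  set p : Fin 3 → ℝ := ![0, x₁, x₂] with hp_def
  have hpU : p ∈ U := hsub x₁ hx₁ x₂
  have hsmem : ∀ y₁ ∈ Set.Ioo (1-δ) 1, (1 - y₁)/δ ∈ Set.Ioo (0:ℝ) 1 := by
    intro y₁ hy
    exact ⟨div_pos (by linarith [hy.2]) hδ0, (div_lt_one hδ0).2 (by linarith [hy.1])⟩
  have hsIoo : s ∈ Set.Ioo (0:ℝ) 1 := hsmem x₁ hx₁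
  -- data for h
  have hexp : ∀ y₁ ∈ Set.Ioo (1-δ) 1, ∀ y₂ : ℝ,
      h ![0, y₁, y₂] = Real.exp (δ * φ₀ ((1 - y₁)/δ) y₂) := by
    intro y₁ hy y₂
    rw [← hd0 y₁ hy y₂, Real.exp_log (hpos _ (hsub y₁ hy y₂))]
  -- differentiability at p
  have dh : DifferentiableAt ℝ h p := differentiableAt_of_c2 hh hU hpU
  have dv1 : DifferentiableAt ℝ v1 p := differentiableAt_of_c2 hv1 hU hpU
  have dv2 : DifferentiableAt ℝ v2 p := differentiableAt_of_c2 hv2 hU hpU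
  have hne : h p ≠ 0 := (hpos p hpU).ne'
  -- abbreviations for profile derivatives
  set D0 : ℝ := deriv (fun s' => φ₀ s' x₂) s with hD0
  set D1 : ℝ := deriv (fun s' => φ₁ s' x₂) s with hD1
  set D2 : ℝ := deriv (fun s' => φ₂ s' x₂) s with hD2
  set T1 : ℝ := deriv (fun θ' => φ₁ s θ') x₂ with hT1
  set T2 : ℝ := deriv (fun θ' => φ₂ s θ') x₂ with hT2
  set D21 : ℝ := deriv (fun s' => deriv (fun θ' => φ₁ s' θ') x₂) s with hD21
  set D22 : ℝ := deriv (fun s' => deriv (fun s'' => φ₂ s'' x₂) s') s with hD22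
  -- first derivative values from data
  have pdv11 : pd 1 v1 p = -D1 := by
    rw [pd1_slice hδ0 hx₁ dv1
      ((profile_diff_s hφ₁ hsIoo x₂).hasDerivAt.const_mul δ)
      (fun y₁ hy => hd1 y₁ hy x₂)]
    rw [← hD1]; field_simp
  have pdv12 : pd 2 v1 p = δ * T1 :=
    pd2_slice dv1 ((profile_diff_t hφ₁ hsIoo x₂).hasDerivAt.const_mul δ)
      (fun y₂ => hd1 x₁ hx₁ y₂)
  have pdv21 : pd 1 v2 p = -(δ * D2) := by
    rw [pd1_slice hδ0 hx₁ dv2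
      ((profile_diff_s hφ₂ hsIoo x₂).hasDerivAt.const_mul (δ^2))
      (fun y₁ hy => hd2 y₁ hy x₂)]
    field_simp; ring
  have pdv22 : pd 2 v2 p = δ^2 * T2 :=
    pd2_slice dv2 ((profile_diff_t hφ₂ hsIoo x₂).hasDerivAt.const_mul (δ^2))
      (fun y₂ => hd2 x₁ hx₁ y₂)
  have pdh1 : pd 1 h p = -(Real.exp (δ * φ₀ s x₂) * D0) := by
    rw [pd1_slice hδ0 hx₁ dh
      (((profile_diff_s hφ₀ hsIoo x₂).hasDerivAt.const_mul δ).exp)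
      (fun y₁ hy => hexp y₁ hy x₂)]
    rw [← hD0]; field_simp
  have pdρ1 : pd 1 (fun y => Real.log (h y)) p = -D0 := by
    rw [pd1_slice hδ0 hx₁ (dh.log hne)
      ((profile_diff_s hφ₀ hsIoo x₂).hasDerivAt.const_mul δ)
      (fun y₁ hy => hd0 y₁ hy x₂)]
    rw [← hD0]; field_simp
  -- second derivative values from data
  have pd21v1 : pd 1 (pd 2 v1) p = -D21 := by
    have inner : ∀ y₁ ∈ Set.Ioo (1-δ) 1,
        pd 2 v1 ![0, y₁, x₂] = δ * deriv (fun θ' => φ₁ ((1-y₁)/δ) θ') x₂ := by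
      intro y₁ hy
      exact pd2_slice (differentiableAt_of_c2 hv1 hU (hsub y₁ hy x₂))
        ((profile_diff_t hφ₁ (hsmem y₁ hy) x₂).hasDerivAt.const_mul δ)
        (fun y₂ => hd1 y₁ hy y₂)
    rw [pd1_slice hδ0 hx₁ (differentiableAt_pd hv1 hU hpU 2)
      ((profile_diff_st hφ₁ hsIoo x₂).hasDerivAt.const_mul δ) inner]
    rw [← hD21]; field_simp
  have pd11v2 : pd 1 (pd 1 v2) p = D22 := by
    have inner : ∀ y₁ ∈ Set.Ioo (1-δ) 1,
        pd 1 v2 ![0, y₁, x₂]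
          = -(1/δ) * (δ^2 * deriv (fun s'' => φ₂ s'' x₂) ((1-y₁)/δ)) := by
      intro y₁ hy
      exact pd1_slice hδ0 hy (differentiableAt_of_c2 hv2 hU (hsub y₁ hy x₂))
        ((profile_diff_s hφ₂ (hsmem y₁ hy) x₂).hasDerivAt.const_mul (δ^2))
        (fun z₁ hz => hd2 z₁ hz x₂)
    rw [pd1_slice hδ0 hx₁ (differentiableAt_pd hv2 hU hpU 1)
      (((profile_diff_ss hφ₂ hsIoo x₂).hasDerivAt.const_mul (δ^2)).const_mul (-(1/δ))) inner]
    field_simp; ring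
  -- point values
  have hhp : h p = Real.exp (δ * φ₀ s x₂) := hexp x₁ hx₁ x₂
  have hρp : Real.log (h p) = δ * φ₀ s x₂ := hd0 x₁ hx₁ x₂
  have hv2p : v2 p = δ^2 * φ₂ s x₂ := hd2 x₁ hx₁ x₂
  -- material derivative of ρ
  have mρ : matD v1 v2 (fun y => Real.log (h y)) p = -(pd 1 v1 p + pd 2 v2 p) := by
    have hm := hmass p hpU
    simp only [matD] at hm ⊢
    rw [pd_log dh hne, pd_log dh hne, pd_log dh hne]
    have : (h p)⁻¹ * pd 0 h p + v1 p * ((h p)⁻¹ * pd 1 h p) + v2 p * ((h p)⁻¹ * pd 2 h p)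
        = (h p)⁻¹ * (pd 0 h p + v1 p * pd 1 h p + v2 p * pd 2 h p) := by ring
    rw [this, hm]
    field_simp
  refine ⟨?_, ?_, ?_⟩
  · -- claim 1
    have hsplit : Lf h v1 v2 (fun y => Real.log (h y)) p
        = matD v1 v2 (fun y => Real.log (h y)) p
          + Real.sqrt (h p) * pd 1 (fun y => Real.log (h y)) p := by
      simp only [Lf, matD]; ring
    rw [hsplit, mρ, pdρ1, pdv11, pdv22]
    ring
  · -- claim 2
    have hsplit : Lf h v1 v2 v1 p
        = matD v1 v2 v1 p + Real.sqrt (h p) * pd 1 v1 p := by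
      simp only [Lf, matD]; ring
    rw [hsplit, hmom1 p hpU, hv2p, pdh1, pdv11]
    ring
  · -- claim 3
    have hsplit : Lf h v1 v2
        (fun y => (1 + pd 1 v2 y - pd 2 v1 y) * Real.exp (-(Real.log (h y)))) p
        = matD v1 v2
            (fun y => (1 + pd 1 v2 y - pd 2 v1 y) * Real.exp (-(Real.log (h y)))) p
          + Real.sqrt (h p)
            * pd 1 (fun y => (1 + pd 1 v2 y - pd 2 v1 y) * Real.exp (-(Real.log (h y)))) p := by
      simp only [Lf, matD]; ring
    have key : (h p)⁻¹ * pd 1 h p = -D0 := by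
      rw [pdh1, hhp]; field_simp
    rw [hsplit, matD_xi_zero hU hh hv1 hv2 hpos hmass hmom1 hmom2 hpU,
      pd_xi hU hh hv1 hv2 (hpos p hpU) hpU 1, key, pd11v2, pd21v1, pdv21, pdv12, hρp]
    ring
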